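/- Let p and q be real numbers with 0 < q < p ≤ 1, let n be a positive integer, and let u, v be real numbers such that u + v + 1 > 0, v + i ≠ 0 for every integer i ≥ 1, and u + v + i ≠ 0 for 1 ≤ i ≤ n. Then the series Σ_{κ=0}^{∞} C_{p,q}(−n,κ) · p^{−(n+κ)(u−κ)} · q^{κ(v+n+κ)} · [u]_{κ,p,q} / Π_{i=1}^{n+κ}[v+i]_{p,q} converges and its sum equals 1/Π_{i=1}^{n}[u+v+i]_{p,q}. -/

import Mathlib

/-- The (p,q)-deformed number `[x]_{p,q} = (p^x - q^x)/(p - q)` (real powers). -/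
noncomputable def pqNum (p q x : ℝ) : ℝ := (p ^ x - q ^ x) / (p - q)

/-- The (p,q)-factorial `[n]_{p,q}! = ∏_{i=1}^n [i]_{p,q}`. -/
noncomputable def pqFac (p q : ℝ) (n : ℕ) : ℝ := ∏ i ∈ Finset.range n, pqNum p q ((i : ℝ) + 1)

/-- The κ-th order (p,q)-factorial `[x]_{κ,p,q} = ∏_{v=0}^{κ-1} [x-v]_{p,q}`. -/
noncomputable def pqFacOrd (p q x : ℝ) (j : ℕ) : ℝ := ∏ v ∈ Finset.range j, pqNum p q (x - (v : ℝ))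

/-- The (p,q)-binomial coefficient with real upper argument: `C_{p,q}(x,κ) = [x]_{κ,p,q}/[κ]_{p,q}!`. -/
noncomputable def pqBinomR (p q x : ℝ) (k : ℕ) : ℝ := pqFacOrd p q x k / pqFac p q k

namespace PQAux

open Real Filter Finset

/-- The series term. -/
noncomputable def W (p q u v : ℝ) (n κ : ℕ) : ℝ :=
  pqBinomR p q (-(n : ℝ)) κ * p ^ (-(((n : ℝ) + (κ : ℝ)) * (u - (κ : ℝ))))
    * q ^ ((κ : ℝ) * (v + (n : ℝ) + (κ : ℝ))) * pqFacOrd p q u κ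
    / ∏ i ∈ Finset.range (n + κ), pqNum p q (v + ((i : ℝ) + 1))

/-- The telescoping certificate. -/
noncomputable def G (p q u v : ℝ) (n : ℕ) : ℕ → ℝ
  | 0 => 0
  | (κ+1) => q ^ (u + v + (n : ℝ) + 1) * p ^ (u - (κ : ℝ)) * pqNum p q ((κ : ℝ) - u)
      * W p q u v (n+1) κ

/-- The one-step ratio of consecutive terms. -/
noncomputable def Rt (p q u v : ℝ) (n κ : ℕ) : ℝ :=
  pqNum p q (-(n : ℝ) - (κ : ℝ)) * pqNum p q (u - (κ : ℝ))
    * (p ^ ((n : ℝ) + 2*(κ : ℝ) + 1 - u) * q ^ (v + (n : ℝ) + 2*(κ : ℝ) + 1))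
    / (pqNum p q ((κ : ℝ) + 1) * pqNum p q (v + (n : ℝ) + (κ : ℝ) + 1))

section Basic
variable {p q u v : ℝ}

theorem pqNum_pos (hq : 0 < q) (hqp : q < p) {x : ℝ} (hx : 0 < x) : 0 < pqNum p q x :=
  div_pos (sub_pos.2 (Real.rpow_lt_rpow hq.le hqp hx)) (sub_pos.2 hqp)

theorem pqNum_ne_zero (hq : 0 < q) (hqp : q < p) {x : ℝ} (hx : x ≠ 0) : pqNum p q x ≠ 0 := by
  have hp0 : 0 < p := hq.trans hqp
  have hne : p ^ x ≠ q ^ x := by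
    intro h
    rw [Real.rpow_def_of_pos hp0, Real.rpow_def_of_pos hq] at h
    have := Real.exp_injective h
    have hlog : Real.log p = Real.log q := by
      exact mul_right_cancel₀ hx this
    have : p = q := by
      have h1 : Real.exp (Real.log p) = Real.exp (Real.log q) := by rw [hlog]
      rwa [Real.exp_log hp0, Real.exp_log hq] at h1
    exact absurd this (ne_of_gt hqp)
  exact div_ne_zero (sub_ne_zero.2 hne) (sub_ne_zero.2 (ne_of_gt hqp))

theorem pqFac_pos (hq : 0 < q) (hqp : q < p) (k : ℕ) : 0 < pqFac p q k :=
  Finset.prod_pos fun i _ => pqNum_pos hq hqp (by positivity)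

theorem pqFac_succ (k : ℕ) : pqFac p q (k+1) = pqFac p q k * pqNum p q ((k : ℝ) + 1) :=
  Finset.prod_range_succ _ _

theorem pqFacOrd_succ (x : ℝ) (k : ℕ) :
    pqFacOrd p q x (k+1) = pqFacOrd p q x k * pqNum p q (x - (k : ℝ)) :=
  Finset.prod_range_succ _ _

theorem pqFacOrd_succ' (x : ℝ) (k : ℕ) :
    pqFacOrd p q x (k+1) = pqNum p q x * pqFacOrd p q (x - 1) k := by
  rw [pqFacOrd, Finset.prod_range_succ']
  rw [mul_comm, pqFacOrd]
  congr 1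
  · norm_num
  · exact Finset.prod_congr rfl fun i _ => by push_cast; ring_nf

/-- nonvanishing of the denominator product -/
theorem prodV_ne_zero (hq : 0 < q) (hqp : q < p)
    (hv : ∀ i : ℕ, 1 ≤ i → v + (i : ℝ) ≠ 0) (m : ℕ) :
    (∏ i ∈ Finset.range m, pqNum p q (v + ((i : ℝ) + 1))) ≠ 0 := by
  refine Finset.prod_ne_zero_iff.2 fun i _ => pqNum_ne_zero hq hqp ?_
  have := hv (i+1) (Nat.le_add_left 1 i)
  push_cast at this ⊢
  exact this

end Basic


section Ratio
variable {p q u v : ℝ}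

theorem W_succ (hq : 0 < q) (hqp : q < p) (hv : ∀ i : ℕ, 1 ≤ i → v + (i : ℝ) ≠ 0)
    (n κ : ℕ) : W p q u v n (κ+1) = W p q u v n κ * Rt p q u v n κ := by
  have hp : 0 < p := hq.trans hqp
  have hFC : pqFac p q κ ≠ 0 := (pqFac_pos hq hqp κ).ne'
  have hN4 : pqNum p q ((κ:ℝ) + 1) ≠ 0 := (pqNum_pos hq hqp (by positivity)).ne'
  have hPP : (∏ i ∈ Finset.range (n + κ), pqNum p q (v + ((i : ℝ) + 1))) ≠ 0 :=
    prodV_ne_zero hq hqp hv (n+κ)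
  have hN5 : pqNum p q (v + (n:ℝ) + (κ:ℝ) + 1) ≠ 0 := by
    refine pqNum_ne_zero hq hqp ?_
    have := hv (n+κ+1) (by omega)
    push_cast at this ⊢
    intro hc; exact this (by linarith)
  unfold W Rt pqBinomR
  push_cast
  rw [pqFacOrd_succ, pqFacOrd_succ u, pqFac_succ,
      show n + (κ+1) = (n+κ)+1 from rfl, Finset.prod_range_succ,
      show (v + (((n + κ : ℕ) : ℝ) + 1)) = v + (n:ℝ)+(κ:ℝ)+1 by push_cast; ring,
      show p ^ (-(((n:ℝ)+((κ:ℝ)+1))*(u-((κ:ℝ)+1))))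
         = p ^ (-(((n:ℝ)+(κ:ℝ))*(u-(κ:ℝ)))) * p ^ ((n:ℝ)+2*(κ:ℝ)+1-u) by
        rw [← Real.rpow_add hp]; congr 1; ring,
      show q ^ (((κ:ℝ)+1)*(v+(n:ℝ)+((κ:ℝ)+1)))
         = q ^ ((κ:ℝ)*(v+(n:ℝ)+(κ:ℝ))) * q ^ (v+(n:ℝ)+2*(κ:ℝ)+1) by
        rw [← Real.rpow_add hq]; congr 1; ring]
  field_simp

end Ratio

section Key
variable {p q u v : ℝ}

set_option maxHeartbeats 4000000 in
theorem key (hq : 0 < q) (hqp : q < p) (hv : ∀ i : ℕ, 1 ≤ i → v + (i : ℝ) ≠ 0)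
    (n κ : ℕ) :
    pqNum p q (u + v + (n : ℝ) + 1) * W p q u v (n+1) κ
      = W p q u v n κ + G p q u v n κ - G p q u v n (κ+1) := by
  have hp : 0 < p := hq.trans hqp
  have hpq : p - q ≠ 0 := sub_ne_zero.2 (ne_of_gt hqp)
  have hpne : p ≠ 0 := hp.ne'
  have hqne : q ≠ 0 := hq.ne'
  have ha : p ^ u ≠ 0 := (Real.rpow_pos_of_pos hp u).ne'
  have hA : q ^ u ≠ 0 := (Real.rpow_pos_of_pos hq u).ne'
  have hd : p ^ (n:ℝ) ≠ 0 := (Real.rpow_pos_of_pos hp _).ne'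
  have hD : q ^ (n:ℝ) ≠ 0 := (Real.rpow_pos_of_pos hq _).ne'
  cases κ with
  | zero =>
    have hPP : (∏ i ∈ Finset.range n, pqNum p q (v + ((i : ℝ) + 1))) ≠ 0 :=
      prodV_ne_zero hq hqp hv n
    have hNPnum : p^v * p^(n:ℝ) * p - q^v * q^(n:ℝ) * q ≠ 0 := by
      have h0 : pqNum p q (v + (n:ℝ) + 1) ≠ 0 := by
        refine pqNum_ne_zero hq hqp ?_
        have := hv (n+1) (by omega); push_cast at this ⊢; intro hc; exact this (by linarith)
      have e : pqNum p q (v + (n:ℝ) + 1) = (p^v * p^(n:ℝ) * p - q^v * q^(n:ℝ) * q)/(p-q) := by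
        rw [pqNum, show v + (n:ℝ) + 1 = v + ((n:ℝ) + 1) by ring,
            Real.rpow_add hp, Real.rpow_add hp, Real.rpow_one,
            Real.rpow_add hq, Real.rpow_add hq, Real.rpow_one, mul_assoc, mul_assoc]
      rw [e] at h0
      exact fun hc => h0 (by rw [hc]; simp)
    simp only [G, W, pqBinomR, pqFacOrd, pqFac, Finset.range_zero, Finset.prod_empty,
      Nat.cast_zero, Nat.add_zero, mul_zero, add_zero, sub_zero, zero_sub, mul_one]
    push_cast
    rw [show (-(((n:ℝ)+1)*u)) = -((n:ℝ)*u) + -u by ring,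
        Real.rpow_add hp, Real.rpow_neg hp.le u,
        show ((0:ℝ)*(v+((n:ℝ)+1))) = 0 by ring, show ((0:ℝ)*(v+(n:ℝ))) = 0 by ring,
        Real.rpow_zero, Finset.prod_range_succ]
    have eN1 : pqNum p q (u+v+(n:ℝ)+1)
        = (p^u * (p^v * p^(n:ℝ) * p) - q^u * (q^v * q^(n:ℝ) * q))/(p-q) := by
      rw [pqNum, show u+v+(n:ℝ)+1 = u+(v+((n:ℝ)+1)) by ring,
        Real.rpow_add hp, Real.rpow_add hp, Real.rpow_add hp, Real.rpow_one,
        Real.rpow_add hq, Real.rpow_add hq, Real.rpow_add hq, Real.rpow_one]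
      ring
    have eNP : pqNum p q (v + ((n:ℝ)+1)) = (p^v * p^(n:ℝ) * p - q^v * q^(n:ℝ) * q)/(p-q) := by
      rw [pqNum, Real.rpow_add hp, Real.rpow_add hp, Real.rpow_one,
        Real.rpow_add hq, Real.rpow_add hq, Real.rpow_one]
      ring
    have eEG : q ^ (u+v+(n:ℝ)+1) = q^u * (q^v * q^(n:ℝ) * q) := by
      rw [show u+v+(n:ℝ)+1 = u+(v+((n:ℝ)+1)) by ring,
        Real.rpow_add hq, Real.rpow_add hq, Real.rpow_add hq, Real.rpow_one]
      ring
    have eN7 : pqNum p q (-u) = ((p^u)⁻¹ - (q^u)⁻¹)/(p-q) := by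
      rw [pqNum, Real.rpow_neg hp.le, Real.rpow_neg hq.le]
    rw [eN1, eNP, eEG, eN7]
    generalize (∏ x ∈ Finset.range n, pqNum p q (v + ((x:ℝ)+1))) = PPv at hPP ⊢
    generalize hga : (p:ℝ)^u = av at ha ⊢
    generalize hgA : (q:ℝ)^u = Av at hA ⊢
    generalize hgb : (p:ℝ)^v = bv at hNPnum ⊢
    generalize hgB : (q:ℝ)^v = Bv at hNPnum ⊢
    generalize hgd : (p:ℝ)^(n:ℝ) = dv at hNPnum hd ⊢
    generalize hgD : (q:ℝ)^(n:ℝ) = Dv at hNPnum hD ⊢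
    generalize hgX : (p:ℝ)^(-((n:ℝ)*u)) = Xv at *
    field_simp
    ring
  | succ κ =>
    have hc : (p:ℝ)^(κ:ℝ) ≠ 0 := (Real.rpow_pos_of_pos hp _).ne'
    have hC : (q:ℝ)^(κ:ℝ) ≠ 0 := (Real.rpow_pos_of_pos hq _).ne'
    have hFC : pqFac p q κ ≠ 0 := (pqFac_pos hq hqp κ).ne'
    have hPP : (∏ i ∈ Finset.range ((n+1) + κ), pqNum p q (v + ((i : ℝ) + 1))) ≠ 0 :=
      prodV_ne_zero hq hqp hv _
    have hN4 : pqNum p q ((κ:ℝ) + 1) ≠ 0 := (pqNum_pos hq hqp (by positivity)).ne'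
    have hNP : pqNum p q (v + ((n:ℝ) + ((κ:ℝ) + (1+1)))) ≠ 0 := by
      refine pqNum_ne_zero hq hqp ?_
      have := hv (n+κ+2) (by omega); push_cast at this ⊢; intro hc2; exact this (by linarith)
    have hPA : (p:ℝ)^(((n:ℝ)+1+(κ:ℝ))*(u+-(κ:ℝ))) ≠ 0 := (Real.rpow_pos_of_pos hp _).ne'
    have hN4' : (p:ℝ)^(κ:ℝ)*p - q^(κ:ℝ)*q ≠ 0 := by
      have e : pqNum p q ((κ:ℝ)+1) = ((p:ℝ)^(κ:ℝ)*p - q^(κ:ℝ)*q)/(p-q) := by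
        rw [pqNum, Real.rpow_add hp, Real.rpow_add hq, Real.rpow_one, Real.rpow_one]
      have h4 : pqNum p q ((κ:ℝ) + 1) ≠ 0 := (pqNum_pos hq hqp (by positivity)).ne'
      rw [e] at h4
      exact fun h => h4 (by rw [h, zero_div])
    have hNP' : (p:ℝ)^v*(p^(n:ℝ)*(p^(κ:ℝ)*(p*p))) - q^v*(q^(n:ℝ)*(q^(κ:ℝ)*(q*q))) ≠ 0 := by
      have hNPx : pqNum p q (v + ((n:ℝ) + ((κ:ℝ) + (1+1)))) ≠ 0 := by
        refine pqNum_ne_zero hq hqp ?_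
        have := hv (n+κ+2) (by omega); push_cast at this ⊢; intro hc2; exact this (by linarith)
      have e : pqNum p q (v + ((n:ℝ) + ((κ:ℝ) + (1+1))))
          = ((p:ℝ)^v*(p^(n:ℝ)*(p^(κ:ℝ)*(p*p))) - q^v*(q^(n:ℝ)*(q^(κ:ℝ)*(q*q))))/(p-q) := by
        rw [pqNum]
        simp only [Real.rpow_add hp, Real.rpow_add hq, Real.rpow_one]
      rw [e] at hNPx
      exact fun h => hNPx (by rw [h, zero_div])
    simp only [G, W, pqBinomR]
    push_cast
    rw [pqFacOrd_succ (-((n:ℝ)+1)) κ, pqFacOrd_succ' (-(n:ℝ)) κ,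
        show (-(n:ℝ)-1 : ℝ) = -((n:ℝ)+1) by ring,
        pqFacOrd_succ u κ, pqFac_succ κ,
        show (n+1)+(κ+1) = ((n+1)+κ)+1 from by omega, Finset.prod_range_succ,
        show n+(κ+1) = (n+1)+κ from by omega,
        show (v + (((((n+1)+κ : ℕ)):ℝ) + 1) : ℝ) = v + ((n:ℝ) + ((κ:ℝ) + (1+1))) by push_cast; ring,
        show (-(((n:ℝ)+1+((κ:ℝ)+1))*(u-((κ:ℝ)+1))) : ℝ)
           = -(((n:ℝ)+1+(κ:ℝ))*(u-(κ:ℝ))) + ((n:ℝ)+((κ:ℝ)+((κ:ℝ)+(1+(1+(-u)))))) by ring,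
        show ((((κ:ℝ)+1))*(v+((n:ℝ)+1)+((κ:ℝ)+1)) : ℝ)
           = (κ:ℝ)*(v+((n:ℝ)+1)+(κ:ℝ)) + (v+((n:ℝ)+((κ:ℝ)+((κ:ℝ)+(1+1))))) by ring,
        show (-(((n:ℝ)+((κ:ℝ)+1))*(u-((κ:ℝ)+1))) : ℝ)
           = -(((n:ℝ)+1+(κ:ℝ))*(u-(κ:ℝ))) + ((n:ℝ)+((κ:ℝ)+1)) by ring,
        show ((((κ:ℝ)+1))*(v+(n:ℝ)+((κ:ℝ)+1)) : ℝ)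
           = (κ:ℝ)*(v+((n:ℝ)+1)+(κ:ℝ)) + (v+((n:ℝ)+((κ:ℝ)+1))) by ring,
        show (u+v+(n:ℝ)+1 : ℝ) = u+(v+((n:ℝ)+1)) by ring,
        show (u - ((κ:ℝ)+1) : ℝ) = u + (-(κ:ℝ) + (-1)) by ring,
        show ((κ:ℝ)+1-u : ℝ) = (κ:ℝ)+(1+(-u)) by ring,
        show (u - (κ:ℝ) : ℝ) = u + (-(κ:ℝ)) by ring,
        show ((κ:ℝ)-u : ℝ) = (κ:ℝ)+(-u) by ring,
        show (-((n:ℝ)+1)-(κ:ℝ) : ℝ) = -((n:ℝ)+(1+(κ:ℝ))) by ring]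
    simp only [pqNum, Real.rpow_add hp, Real.rpow_add hq, Real.rpow_neg hp.le,
      Real.rpow_neg hq.le, Real.rpow_one]
    simp only [pqNum, Real.rpow_add hp, Real.rpow_add hq, Real.rpow_one] at hPP
    generalize pqFacOrd p q (-((n:ℝ)+1)) κ = FOv
    generalize pqFacOrd p q u κ = FUv
    generalize hg3 : pqFac p q κ = FCv at hFC
    generalize (∏ x ∈ Finset.range (n+1+κ),
        ((p:ℝ)^v*(p^(x:ℝ)*p) - q^v*(q^(x:ℝ)*q))/(p-q)) = PPv at hPP ⊢
    generalize (p:ℝ)^(((n:ℝ)+1+(κ:ℝ))*(u+-(κ:ℝ))) = PAv at hPA ⊢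
    generalize (q:ℝ)^((κ:ℝ)*(v+((n:ℝ)+1)+(κ:ℝ))) = QBv
    generalize (p:ℝ)^u = av at ha ⊢
    generalize (q:ℝ)^u = Av at hA ⊢
    generalize (p:ℝ)^v = bv at hNP' ⊢
    generalize (q:ℝ)^v = Bv at hNP' ⊢
    generalize (p:ℝ)^(κ:ℝ) = cv at hc hN4' hNP' ⊢
    generalize (q:ℝ)^(κ:ℝ) = Cv at hC hN4' hNP' ⊢
    generalize (p:ℝ)^(n:ℝ) = dv at hd hNP' ⊢
    generalize (q:ℝ)^(n:ℝ) = Dv at hD hNP' ⊢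
    have hprod := mul_ne_zero hN4' hNP'
    field_simp
    have e1 : p*cv - q*Cv ≠ 0 := by intro h; apply hN4'; linarith
    have e2 : (-(p*Bv*Dv*q^2*cv*Cv) - p^2*bv*dv*q*cv*Cv + p^3*bv*dv*cv^2 + Bv*Dv*q^3*Cv^2) ≠ 0 := by
      intro h; apply hprod; linear_combination h
    field_simp
    have e3 : p^2*bv*dv*cv - Bv*Dv*q^2*Cv ≠ 0 := by
      intro h; apply hNP'; linear_combination h
    field_simp
    ring

end Key

section Analysis
variable {p q u v : ℝ}

theorem tendsto_tpow {t : ℝ} (h0 : 0 < t) (h1 : t < 1) (c : ℝ) :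
    Filter.Tendsto (fun κ : ℕ => t ^ (c + (κ:ℝ))) Filter.atTop (nhds 0) := by
  have h := tendsto_rpow_atTop_of_base_lt_one t (by linarith) h1
  have h2 : Filter.Tendsto (fun κ : ℕ => c + (κ:ℝ)) Filter.atTop Filter.atTop :=
    Filter.tendsto_atTop_add_const_left _ c tendsto_natCast_atTop_atTop
  exact h.comp h2

/-- The four renormalized factors of the ratio. -/
noncomputable def Y1 (p q u v : ℝ) (n : ℕ) (κ : ℕ) : ℝ :=
  pqNum p q (-(n:ℝ) - (κ:ℝ)) * q ^ ((n:ℝ) + (κ:ℝ))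
noncomputable def Y2 (p q u v : ℝ) (n : ℕ) (κ : ℕ) : ℝ :=
  pqNum p q (u - (κ:ℝ)) * q ^ (-u + (κ:ℝ))
noncomputable def Y3 (p q u v : ℝ) (n : ℕ) (κ : ℕ) : ℝ :=
  pqNum p q ((κ:ℝ) + 1) * (p ^ (1 + (κ:ℝ)))⁻¹
noncomputable def Y4 (p q u v : ℝ) (n : ℕ) (κ : ℕ) : ℝ :=
  pqNum p q (v + (n:ℝ) + (κ:ℝ) + 1) * (p ^ ((v + (n:ℝ) + 1) + (κ:ℝ)))⁻¹

theorem Rt_form (hq : 0 < q) (hqp : q < p) (hv : ∀ i : ℕ, 1 ≤ i → v + (i : ℝ) ≠ 0)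
    (n κ : ℕ) :
    Rt p q u v n κ = Y1 p q u v n κ * Y2 p q u v n κ / (Y3 p q u v n κ * Y4 p q u v n κ)
      * (q ^ (u+v+1) / p ^ (u+v+1)) := by
  have hp : 0 < p := hq.trans hqp
  have hN4 : pqNum p q ((κ:ℝ)+1) ≠ 0 := (pqNum_pos hq hqp (by positivity)).ne'
  have hN5 : pqNum p q (v + (n:ℝ) + (κ:ℝ) + 1) ≠ 0 := by
    refine pqNum_ne_zero hq hqp ?_
    have := hv (n+κ+1) (by omega); push_cast at this ⊢; intro hc; exact this (by linarith)
  have hpx : ∀ x : ℝ, (p:ℝ) ^ x ≠ 0 := fun x => (Real.rpow_pos_of_pos hp x).ne'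
  have hqx : ∀ x : ℝ, (q:ℝ) ^ x ≠ 0 := fun x => (Real.rpow_pos_of_pos hq x).ne'
  have ep : (p:ℝ)^((n:ℝ)+2*(κ:ℝ)+1-u)
      = p^(1+(κ:ℝ)) * p^((v+(n:ℝ)+1)+(κ:ℝ)) * (p^(u+v+1))⁻¹ := by
    rw [← Real.rpow_neg hp.le, ← Real.rpow_add hp, ← Real.rpow_add hp]
    congr 1; ring
  have eq' : (q:ℝ)^(v+(n:ℝ)+2*(κ:ℝ)+1)
      = q^((n:ℝ)+(κ:ℝ)) * q^(-u+(κ:ℝ)) * q^(u+v+1) := by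
    rw [← Real.rpow_add hq, ← Real.rpow_add hq]
    congr 1; ring
  unfold Rt Y1 Y2 Y3 Y4
  rw [ep, eq']
  field_simp

theorem tendsto_Rt (hq : 0 < q) (hqp : q < p)
    (hv : ∀ i : ℕ, 1 ≤ i → v + (i : ℝ) ≠ 0) (n : ℕ) :
    Filter.Tendsto (fun κ : ℕ => Rt p q u v n κ) Filter.atTop
      (nhds ((q/p) ^ (u+v+1))) := by
  have hp : 0 < p := hq.trans hqp
  have hpq : p - q ≠ 0 := sub_ne_zero.2 (ne_of_gt hqp)
  have ht0 : 0 < q/p := div_pos hq hp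
  have ht1 : q/p < 1 := (div_lt_one hp).2 hqp
  have hrule : ∀ x : ℝ, ((q/p):ℝ) ^ x = q ^ x / p ^ x := fun x =>
    Real.div_rpow hq.le hp.le x
  have hpx : ∀ x : ℝ, (p:ℝ) ^ x ≠ 0 := fun x => (Real.rpow_pos_of_pos hp x).ne'
  have hqx : ∀ x : ℝ, (q:ℝ) ^ x ≠ 0 := fun x => (Real.rpow_pos_of_pos hq x).ne'
  have e1 : ∀ κ : ℕ, Y1 p q u v n κ = ((q/p) ^ ((n:ℝ) + (κ:ℝ)) - 1)/(p-q) := by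
    intro κ
    rw [Y1, pqNum, hrule, show (-(n:ℝ) - (κ:ℝ) : ℝ) = -((n:ℝ)+(κ:ℝ)) by ring,
       Real.rpow_neg hp.le, Real.rpow_neg hq.le]
    field_simp
  have e2 : ∀ κ : ℕ, Y2 p q u v n κ = ((q/p) ^ (-u + (κ:ℝ)) - 1)/(p-q) := by
    intro κ
    rw [Y2, pqNum, hrule, show (u - (κ:ℝ) : ℝ) = -(-u+(κ:ℝ)) by ring,
       Real.rpow_neg hp.le, Real.rpow_neg hq.le]
    field_simp
  have e3 : ∀ κ : ℕ, Y3 p q u v n κ = (1 - (q/p) ^ (1 + (κ:ℝ)))/(p-q) := by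
    intro κ
    rw [Y3, pqNum, hrule, show ((κ:ℝ) + 1 : ℝ) = 1 + (κ:ℝ) by ring]
    field_simp
  have e4 : ∀ κ : ℕ, Y4 p q u v n κ = (1 - (q/p) ^ ((v+(n:ℝ)+1) + (κ:ℝ)))/(p-q) := by
    intro κ
    rw [Y4, pqNum, hrule, show (v + (n:ℝ) + (κ:ℝ) + 1 : ℝ) = (v+(n:ℝ)+1) + (κ:ℝ) by ring]
    field_simp
  have h1 : Filter.Tendsto (fun κ : ℕ => Y1 p q u v n κ) Filter.atTop (nhds ((0-1)/(p-q))) := by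
    simp only [e1]
    exact (((tendsto_tpow ht0 ht1 (n:ℝ)).sub_const 1).div_const (p-q))
  have h2 : Filter.Tendsto (fun κ : ℕ => Y2 p q u v n κ) Filter.atTop (nhds ((0-1)/(p-q))) := by
    simp only [e2]
    exact (((tendsto_tpow ht0 ht1 (-u)).sub_const 1).div_const (p-q))
  have h3 : Filter.Tendsto (fun κ : ℕ => Y3 p q u v n κ) Filter.atTop (nhds ((1-0)/(p-q))) := by
    simp only [e3]
    exact (((tendsto_tpow ht0 ht1 1).const_sub 1).div_const (p-q))
  have h4 : Filter.Tendsto (fun κ : ℕ => Y4 p q u v n κ) Filter.atTop (nhds ((1-0)/(p-q))) := by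
    simp only [e4]
    exact (((tendsto_tpow ht0 ht1 (v+(n:ℝ)+1)).const_sub 1).div_const (p-q))
  have hden : ((1-0)/(p-q)) * ((1-0)/(p-q)) ≠ 0 := by
    field_simp
    simp [hpq]
  have hcomb : Filter.Tendsto
      (fun κ : ℕ => Y1 p q u v n κ * Y2 p q u v n κ / (Y3 p q u v n κ * Y4 p q u v n κ)
        * (q ^ (u+v+1) / p ^ (u+v+1)))
      Filter.atTop
      (nhds (((0-1)/(p-q)) * ((0-1)/(p-q)) / (((1-0)/(p-q)) * ((1-0)/(p-q)))
        * (q ^ (u+v+1) / p ^ (u+v+1)))) :=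
    (((h1.mul h2).div (h3.mul h4) hden).mul_const _)
  have hval : ((0-1)/(p-q)) * ((0-1)/(p-q)) / (((1-0)/(p-q)) * ((1-0)/(p-q)))
      * (q ^ (u+v+1) / p ^ (u+v+1)) = (q/p) ^ (u+v+1) := by
    rw [Real.div_rpow hq.le hp.le]
    field_simp
    norm_num
  rw [show (fun κ : ℕ => Rt p q u v n κ)
      = fun κ : ℕ => Y1 p q u v n κ * Y2 p q u v n κ / (Y3 p q u v n κ * Y4 p q u v n κ)
        * (q ^ (u+v+1) / p ^ (u+v+1)) from funext fun κ => Rt_form hq hqp hv n κ]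
  rw [← hval]
  exact hcomb

theorem summable_norm_W (hq : 0 < q) (hqp : q < p) (huv1 : 0 < u + v + 1)
    (hv : ∀ i : ℕ, 1 ≤ i → v + (i : ℝ) ≠ 0) (n : ℕ) :
    Summable (fun κ : ℕ => ‖W p q u v n κ‖) := by
  have hp : 0 < p := hq.trans hqp
  have ht0 : 0 < q/p := div_pos hq hp
  have ht1 : q/p < 1 := (div_lt_one hp).2 hqp
  set L : ℝ := (q/p) ^ (u+v+1) with hL
  have hL0 : 0 < L := Real.rpow_pos_of_pos ht0 _
  have hL1 : L < 1 := Real.rpow_lt_one ht0.le ht1 huv1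
  have hr1 : (1+L)/2 < 1 := by linarith
  have hLr : L < (1+L)/2 := by linarith
  have hev : ∀ᶠ κ in Filter.atTop, ‖Rt p q u v n κ‖ ≤ (1+L)/2 := by
    have := ((tendsto_Rt hq hqp hv n).norm).eventually_lt_const
      (by rwa [Real.norm_of_nonneg hL0.le] : ‖(q/p) ^ (u+v+1)‖ < (1+L)/2)
    exact this.mono fun κ h => le_of_lt h
  refine summable_of_ratio_norm_eventually_le hr1 ?_
  refine hev.mono fun κ h => ?_
  rw [norm_norm, norm_norm, W_succ hq hqp hv n κ, norm_mul]
  calc ‖W p q u v n κ‖ * ‖Rt p q u v n κ‖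
      ≤ ‖W p q u v n κ‖ * ((1+L)/2) :=
        mul_le_mul_of_nonneg_left h (norm_nonneg _)
    _ = (1+L)/2 * ‖W p q u v n κ‖ := mul_comm _ _

theorem summable_W (hq : 0 < q) (hqp : q < p) (huv1 : 0 < u + v + 1)
    (hv : ∀ i : ℕ, 1 ≤ i → v + (i : ℝ) ≠ 0) (n : ℕ) :
    Summable (fun κ : ℕ => W p q u v n κ) :=
  (summable_norm_W hq hqp huv1 hv n).of_norm

end Analysis

section Main
variable {p q u v : ℝ}

theorem G_zero (n : ℕ) : G p q u v n 0 = 0 := rfl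

theorem pqFacOrd_zero_eq' (k : ℕ) : pqFacOrd p q 0 (k+1) = 0 := by
  rw [pqFacOrd_succ']
  simp [pqNum]

theorem summable_G (hq : 0 < q) (hqp : q < p) (huv1 : 0 < u + v + 1)
    (hv : ∀ i : ℕ, 1 ≤ i → v + (i : ℝ) ≠ 0) (n : ℕ) :
    Summable (fun κ : ℕ => G p q u v n κ) := by
  have hp : 0 < p := hq.trans hqp
  have hpq : 0 < p - q := sub_pos.2 hqp
  have ht0 : 0 < q/p := div_pos hq hp
  have ht1 : q/p < 1 := (div_lt_one hp).2 hqp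
  rw [← summable_nat_add_iff 1]
  set C : ℝ := q ^ (u + v + (n:ℝ) + 1) * ((1 + (q/p) ^ (-u))/(p-q)) with hC
  refine Summable.of_norm_bounded (g := fun κ => C * ‖W p q u v (n+1) κ‖)
    ((summable_norm_W hq hqp huv1 hv (n+1)).mul_left C) ?_
  intro κ
  show ‖G p q u v n (κ+1)‖ ≤ _
  have escal : p ^ (u - (κ:ℝ)) * pqNum p q ((κ:ℝ) - u)
      = (1 - (q/p) ^ (-u + (κ:ℝ)))/(p-q) := by
    rw [pqNum, Real.div_rpow hq.le hp.le,
        show ((κ:ℝ) - u : ℝ) = -u + (κ:ℝ) by ring,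
        show (u - (κ:ℝ) : ℝ) = -(-u + (κ:ℝ)) by ring, Real.rpow_neg hp.le]
    have hpx : (p:ℝ) ^ (-u + (κ:ℝ)) ≠ 0 := (Real.rpow_pos_of_pos hp _).ne'
    field_simp
  have hbound : ‖p ^ (u - (κ:ℝ)) * pqNum p q ((κ:ℝ) - u)‖ ≤ (1 + (q/p) ^ (-u))/(p-q) := by
    rw [escal, Real.norm_eq_abs, abs_div, abs_of_pos hpq]
    gcongr
    have hsplit : ((q/p):ℝ) ^ (-u + (κ:ℝ)) = (q/p) ^ (-u) * (q/p) ^ (κ:ℝ) :=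
      Real.rpow_add ht0 _ _
    have h0 : (0:ℝ) ≤ (q/p) ^ (-u + (κ:ℝ)) := (Real.rpow_pos_of_pos ht0 _).le
    have h1 : ((q/p):ℝ) ^ (-u + (κ:ℝ)) ≤ (q/p) ^ (-u) := by
      rw [hsplit]
      have hk1 : ((q/p):ℝ) ^ (κ:ℝ) ≤ 1 := Real.rpow_le_one ht0.le ht1.le (by positivity)
      have := mul_le_mul_of_nonneg_left hk1 (le_of_lt (Real.rpow_pos_of_pos ht0 (-u)))
      simpa using this
    have h2 : (0:ℝ) ≤ (q/p) ^ (-u) := (Real.rpow_pos_of_pos ht0 _).le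
    rw [abs_le]
    constructor <;> nlinarith
  have : G p q u v n (κ+1)
      = q ^ (u + v + (n:ℝ) + 1) * (p ^ (u - (κ:ℝ)) * pqNum p q ((κ:ℝ) - u))
        * W p q u v (n+1) κ := by
    show q ^ (u + v + (n : ℝ) + 1) * p ^ (u - (κ : ℝ)) * pqNum p q ((κ : ℝ) - u)
      * W p q u v (n+1) κ = _
    ring
  rw [this, norm_mul, norm_mul]
  have hqE : ‖(q:ℝ) ^ (u + v + (n:ℝ) + 1)‖ = q ^ (u + v + (n:ℝ) + 1) :=
    Real.norm_of_nonneg (Real.rpow_pos_of_pos hq _).le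
  rw [hqE, hC]
  have := mul_le_mul_of_nonneg_left hbound (Real.rpow_pos_of_pos hq (u + v + (n:ℝ) + 1)).le
  have h3 := mul_le_mul_of_nonneg_right this (norm_nonneg (W p q u v (n+1) κ))
  calc q ^ (u + v + (n:ℝ) + 1) * ‖p ^ (u - (κ:ℝ)) * pqNum p q ((κ:ℝ) - u)‖
        * ‖W p q u v (n+1) κ‖
      ≤ q ^ (u + v + (n:ℝ) + 1) * ((1 + (q/p) ^ (-u))/(p-q)) * ‖W p q u v (n+1) κ‖ := h3
    _ = _ := by ring

theorem hasSum_W (hq : 0 < q) (hqp : q < p) (huv1 : 0 < u + v + 1)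
    (hv : ∀ i : ℕ, 1 ≤ i → v + (i : ℝ) ≠ 0) (n : ℕ) :
    HasSum (fun κ : ℕ => W p q u v n κ)
      (1 / ∏ i ∈ Finset.range n, pqNum p q (u + v + ((i : ℝ) + 1))) := by
  induction n with
  | zero =>
    simp only [Finset.range_zero, Finset.prod_empty]
    have h0 : W p q u v 0 0 = 1 := by
      simp [W, pqBinomR, pqFacOrd, pqFac]
    have hz : ∀ b : ℕ, b ≠ 0 → W p q u v 0 b = 0 := by
      intro b hb
      obtain ⟨κ, rfl⟩ := Nat.exists_eq_succ_of_ne_zero hb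
      have hz0 : pqFacOrd p q 0 (κ+1) = 0 := pqFacOrd_zero_eq' κ
      simp [W, pqBinomR, hz0]
    have := hasSum_single (f := fun κ : ℕ => W p q u v 0 κ) 0 hz
    simpa [h0] using this
  | succ n ih =>
    have hp : 0 < p := hq.trans hqp
    have hcpos : (0:ℝ) < u + v + (n:ℝ) + 1 := by
      have : (0:ℝ) ≤ (n:ℝ) := Nat.cast_nonneg n
      linarith
    have hc : pqNum p q (u + v + (n:ℝ) + 1) ≠ 0 :=
      (pqNum_pos hq hqp hcpos).ne'
    have hGsum : Summable (fun κ : ℕ => G p q u v n κ) :=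
      summable_G hq hqp huv1 hv n
    obtain ⟨SG, hG⟩ := hGsum
    have hG1 : HasSum (fun κ : ℕ => G p q u v n (κ+1)) SG := by
      have := (hasSum_nat_add_iff' (f := fun κ : ℕ => G p q u v n κ) 1).mpr hG
      simpa [G_zero] using this
    have hcomb : HasSum
        (fun κ : ℕ => W p q u v n κ + G p q u v n κ - G p q u v n (κ+1))
        (1 / ∏ i ∈ Finset.range n, pqNum p q (u + v + ((i : ℝ) + 1)) + SG - SG) :=
      (ih.add hG).sub hG1
    rw [show (fun κ : ℕ => W p q u v n κ + G p q u v n κ - G p q u v n (κ+1))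
        = fun κ : ℕ => pqNum p q (u + v + (n:ℝ) + 1) * W p q u v (n+1) κ from
      funext fun κ => (key hq hqp hv n κ).symm] at hcomb
    have hcomb2 := hcomb.mul_left (pqNum p q (u + v + (n:ℝ) + 1))⁻¹
    simp only [inv_mul_cancel_left₀ hc] at hcomb2
    have htarget :
        (pqNum p q (u + v + (n:ℝ) + 1))⁻¹
          * (1 / ∏ i ∈ Finset.range n, pqNum p q (u + v + ((i : ℝ) + 1)) + SG - SG)
        = 1 / ∏ i ∈ Finset.range (n+1), pqNum p q (u + v + ((i : ℝ) + 1)) := by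
      rw [Finset.prod_range_succ,
          show (u + v + ((n:ℝ) + 1) : ℝ) = u + v + (n:ℝ) + 1 by ring]
      rw [one_div, one_div, mul_inv]
      ring
    rw [htarget] at hcomb2
    exact hcomb2

end Main

end PQAux

set_option maxHeartbeats 400000 in
/-- The negative (p,q)-deformed Vandermonde formula as a convergent series. -/
theorem pq_negative_vandermonde_series (p q : ℝ) (hq : 0 < q) (hqp : q < p) (hp : p ≤ 1)
    (n : ℕ) (hn : 0 < n) (u v : ℝ) (huv1 : 0 < u + v + 1)
    (hv : ∀ i : ℕ, 1 ≤ i → v + (i : ℝ) ≠ 0)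
    (huv : ∀ i : ℕ, 1 ≤ i → i ≤ n → u + v + (i : ℝ) ≠ 0) :
    HasSum
      (fun κ : ℕ =>
        pqBinomR p q (-(n : ℝ)) κ * p ^ (-(((n : ℝ) + (κ : ℝ)) * (u - (κ : ℝ))))
          * q ^ ((κ : ℝ) * (v + (n : ℝ) + (κ : ℝ)))
          * pqFacOrd p q u κ
          / ∏ i ∈ Finset.range (n + κ), pqNum p q (v + ((i : ℝ) + 1)))
      (1 / ∏ i ∈ Finset.range n, pqNum p q (u + v + ((i : ℝ) + 1))) :=
  PQAux.hasSum_W hq hqp huv1 hv n
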